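/- arXiv:2012.14923 — 2 statements merged into one kernel-verified Lean document; each statement's English description precedes it below -/
import Mathlib

section
/- In Aut(F_n), for distinct indices i ≠ j, one has w_{a_i a_j} = w_{a_i⁻¹ a_j⁻¹}, i.e., E_{a_j a_i}·E_{a_i⁻¹ a_j}·E_{a_j⁻¹ a_i⁻¹} = E_{a_j⁻¹ a_i⁻¹}·E_{a_i a_j⁻¹}·E_{a_j a_i}. -/
open FreeGroup

/-- `IsNielsen e i bi j bj` says `e` is the Nielsen automorphism `E_{x y}` of the free
group `F_n = FreeGroup (Fin n)`, where `x = aᵢ` if `bi = true` and `x = aᵢ⁻¹` otherwise,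
and `y = aⱼ` if `bj = true` and `y = aⱼ⁻¹` otherwise: it sends `x ↦ x * y`
(equivalently, for `x = aᵢ⁻¹` it sends `aᵢ ↦ y⁻¹ * aᵢ`) and fixes all basis elements
other than `aᵢ`. -/
def IsNielsen {n : ℕ} (e : MulAut (FreeGroup (Fin n)))
    (i : Fin n) (bi : Bool) (j : Fin n) (bj : Bool) : Prop :=
  (if bi then e (of i) = of i * (if bj then of j else (of j)⁻¹)
   else e (of i) = (if bj then of j else (of j)⁻¹)⁻¹ * of i) ∧
  ∀ k : Fin n, k ≠ i → e (of k) = of k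

/-- For `i ≠ j`, `w_{aᵢ aⱼ} = w_{aᵢ⁻¹ aⱼ⁻¹}`, i.e.
`E_{aⱼaᵢ} · E_{aᵢ⁻¹aⱼ} · E_{aⱼ⁻¹aᵢ⁻¹} = E_{aⱼ⁻¹aᵢ⁻¹} · E_{aᵢaⱼ⁻¹} · E_{aⱼaᵢ}`
(products composed left to right; in Lean the factors appear in reverse order). -/
theorem w_eq_w_inv {n : ℕ} (i j : Fin n) (hij : i ≠ j)
    (A B C D : MulAut (FreeGroup (Fin n)))
    (hA : IsNielsen A j true i true)    -- E_{aⱼ aᵢ}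
    (hB : IsNielsen B i false j true)   -- E_{aᵢ⁻¹ aⱼ}
    (hC : IsNielsen C j false i false)  -- E_{aⱼ⁻¹ aᵢ⁻¹}
    (hD : IsNielsen D i true j false)   -- E_{aᵢ aⱼ⁻¹}
    :
    C * B * A = A * D * C := by
  obtain ⟨hA1, hA2⟩ := hA
  obtain ⟨hB1, hB2⟩ := hB
  obtain ⟨hC1, hC2⟩ := hC
  obtain ⟨hD1, hD2⟩ := hD
  simp only [if_true, if_false, Bool.false_eq_true, ite_true, ite_false, inv_inv] at hA1 hB1 hC1 hD1
  apply MulEquiv.toMonoidHom_injective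
  apply FreeGroup.ext_hom
  intro k
  simp only [MulEquiv.coe_toMonoidHom, MulAut.mul_apply]
  by_cases hk : k = i
  · subst hk
    simp only [hA2 k hij, hB1, _root_.map_mul, _root_.map_inv, hC1, hC2 k hij, hD1, hA1]
    group
  · by_cases hk2 : k = j
    · subst hk2
      simp only [hA1, hB1, hB2 k (Ne.symm hij), hC1, hC2 i hij, hD1, hD2 k (Ne.symm hij),
        hA2 i hij, _root_.map_mul, _root_.map_inv]
      group
    · simp [hA2 k hk2, hB2 k hk, hC2 k hk2, hD2 k hk]
end

section
/- In Aut(F_n), for pairwise distinct indices i, j, k, conjugation by w_{a_1 a_j} transforms E_{a_1⁻¹ a_k} into E_{a_j a_k}: w_{a_1 a_j}⁻¹ · E_{a_1⁻¹ a_k} · w_{a_1 a_j} = E_{a_j a_k} (left-to-right composition). -/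
open FreeGroup

/-- For distinct `j, k ≥ 2` (here indices `≠ 0`, with `a₁ = of 0`), conjugation by
`w_{a₁ aⱼ}` transforms `E_{a₁⁻¹ aₖ}` into `E_{aⱼ aₖ}`:
`w_{a₁aⱼ}⁻¹ · E_{a₁⁻¹aₖ} · w_{a₁aⱼ} = E_{aⱼaₖ}` with left-to-right composition, i.e. in
Lean `w * E_{a₁⁻¹aₖ} * w⁻¹ = E_{aⱼaₖ}` where `w = E₃ * E₂ * E₁` is `w_{a₁aⱼ}`. -/
theorem w_conj_nielsen {m : ℕ} (j k : Fin (m + 3))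
    (hj : j ≠ 0) (hk : k ≠ 0) (hjk : j ≠ k)
    (E₁ E₂ E₃ Ek Ejk : MulAut (FreeGroup (Fin (m + 3))))
    (h₁ : IsNielsen E₁ j true 0 true)     -- E_{aⱼ a₁}
    (h₂ : IsNielsen E₂ 0 false j true)    -- E_{a₁⁻¹ aⱼ}
    (h₃ : IsNielsen E₃ j false 0 false)   -- E_{aⱼ⁻¹ a₁⁻¹}
    (hEk : IsNielsen Ek 0 false k true)   -- E_{a₁⁻¹ aₖ}
    (hEjk : IsNielsen Ejk j true k true)  -- E_{aⱼ aₖ}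
    :
    (E₃ * E₂ * E₁) * Ek * (E₃ * E₂ * E₁)⁻¹ = Ejk := by

  obtain ⟨h₁a, h₁b⟩ := h₁
  obtain ⟨h₂a, h₂b⟩ := h₂
  obtain ⟨h₃a, h₃b⟩ := h₃
  obtain ⟨hka, hkb⟩ := hEk
  obtain ⟨hja, hjb⟩ := hEjk
  simp only [if_true, if_false, Bool.false_eq_true, inv_inv] at h₁a h₂a h₃a hka hja
  have E₁0 : E₁ (of 0) = of 0 := h₁b 0 (Ne.symm hj)
  have E₁k : E₁ (of k) = of k := h₁b k (Ne.symm hjk)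
  have E₂j : E₂ (of j) = of j := h₂b j hj
  have E₂k : E₂ (of k) = of k := h₂b k hk
  have E₃0 : E₃ (of 0) = of 0 := h₃b 0 (Ne.symm hj)
  have E₃k : E₃ (of k) = of k := h₃b k (Ne.symm hjk)
  have Ekj : Ek (of j) = of j := hkb j hj
  have Ekk : Ek (of k) = of k := hkb k hk
  have Ej0 : Ejk (of 0) = of 0 := hjb 0 (Ne.symm hj)
  have Ejkk : Ejk (of k) = of k := hjb k (Ne.symm hjk)
  rw [mul_inv_eq_iff_eq_mul]
  apply MulEquiv.toMonoidHom_injective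
  apply FreeGroup.ext_hom
  intro x
  simp only [MulEquiv.coe_toMonoidHom, MulAut.mul_apply]
  by_cases hx0 : x = 0
  · subst hx0
    simp only [_root_.map_mul, _root_.map_inv, hka, h₁a, h₂a, h₃a, hja, E₁0, E₁k,
      E₂j, E₂k, E₃0, E₃k, Ej0, Ejkk]
    group
  by_cases hxj : x = j
  · subst hxj
    simp only [_root_.map_mul, _root_.map_inv, Ekj, h₁a, h₂a, h₃a, hja, E₁0, E₂j,
      E₃0, Ej0, Ejkk]
    group
  by_cases hxk : x = k
  · subst hxk
    rw [Ekk, E₁k, E₂k, E₃k, Ejkk]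
  · rw [hkb x hx0, h₁b x hxj, h₂b x hx0, h₃b x hxj, hjb x hxj]
end
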